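/- Let n ≥ 1 and let M be an n×n complex matrix admitting a diagonalization M = U · diag(λ_1, …, λ_n) · U⁻¹ with U invertible, where the λ_i are pairwise distinct with |λ_i − λ_j| ≥ ε for all i ≠ j (ε > 0) and |λ_i| ≤ B for all i. Let E be a natural number, let δ > 0, and let p be a polynomial with complex coefficients such that |p(λ_i) − λ_i^E| ≤ δ for every i. Then every entry of the matrix p(M) − M^E has absolute value at most δ · n² · (1+B)^{n−1} · ε^{−(n−1)} · (n · max(1, ‖M‖))^{n−1}. -/

import Mathlib

/-- The max-norm of a matrix: the supremum of the absolute values of its entries. -/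
noncomputable def matMaxNorm {n : ℕ} (M : Matrix (Fin n) (Fin n) ℂ) : ℝ :=
  ⨆ i, ⨆ j, ‖M i j‖

lemma abs_le_matMaxNorm {n : ℕ} (M : Matrix (Fin n) (Fin n) ℂ) (i j : Fin n) :
    ‖M i j‖ ≤ matMaxNorm M := by
  have h1 : ‖M i j‖ ≤ ⨆ k, ‖M i k‖ :=
    le_ciSup (f := fun k => ‖M i k‖) (Set.Finite.bddAbove (Set.finite_range _)) j
  exact h1.trans (le_ciSup (f := fun a => ⨆ k, ‖M a k‖)
    (Set.Finite.bddAbove (Set.finite_range _)) i)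

/-- Conjugation by a unit as an algebra homomorphism. -/
def conjAlgHom {R : Type*} [Ring R] [Algebra ℂ R] (u : Rˣ) : R →ₐ[ℂ] R where
  toFun x := ↑u * x * ↑u⁻¹
  map_one' := by simp
  map_mul' x y := by
    simp only [mul_assoc]
    rw [← mul_assoc ((u⁻¹ : Rˣ) : R) ((u : Rˣ) : R), u.inv_mul, one_mul]
  map_zero' := by simp
  map_add' x y := by
    simp [mul_add, add_mul]
  commutes' c := by
    simp [Algebra.algebraMap_eq_smul_one, mul_smul_comm, smul_mul_assoc]

@[simp] lemma conjAlgHom_apply {R : Type*} [Ring R] [Algebra ℂ R] (u : Rˣ) (x : R) :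
    conjAlgHom u x = ↑u * x * ↑u⁻¹ := rfl

/-- Bound on entries of a product. -/
lemma entry_mul_le {n : ℕ} (A B : Matrix (Fin n) (Fin n) ℂ) (a b : ℝ) (ha : 0 ≤ a)
    (hA : ∀ i j, ‖A i j‖ ≤ a) (hB : ∀ i j, ‖B i j‖ ≤ b) :
    ∀ i j, ‖(A * B) i j‖ ≤ n * (a * b) := by
  intro i j
  rw [Matrix.mul_apply]
  calc ‖∑ k, A i k * B k j‖ ≤ ∑ k, ‖A i k * B k j‖ :=
        norm_sum_le _ _
    _ ≤ ∑ _k : Fin n, a * b := by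
        refine Finset.sum_le_sum fun k _ => ?_
        rw [norm_mul]
        exact mul_le_mul (hA i k) (hB k j) (norm_nonneg _) ha
    _ = n * (a * b) := by simp [mul_comm]

lemma aeval_prod_entry_bound {n : ℕ} (M : Matrix (Fin n) (Fin n) ℂ)
    (f : Fin n → Polynomial ℂ) (c : ℝ) (hc : 0 ≤ c)
    (hf : ∀ j a b, ‖(Polynomial.aeval M (f j)) a b‖ ≤ c)
    (s : Finset (Fin n)) :
    ∀ a b, ‖(Polynomial.aeval M (∏ j ∈ s, f j)) a b‖ ≤ ((n : ℝ) * c) ^ s.card := by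
  classical
  refine Finset.induction_on s ?_ ?_
  · intro a b
    simp only [Finset.prod_empty, map_one, Finset.card_empty, pow_zero]
    rcases eq_or_ne a b with rfl | hab
    · simp [Matrix.one_apply]
    · simp [Matrix.one_apply, hab]
  · intro x t hx ih a b
    rw [Finset.prod_insert hx, map_mul, Finset.card_insert_of_notMem hx, pow_succ']
    have := entry_mul_le (Polynomial.aeval M (f x)) (Polynomial.aeval M (∏ j ∈ t, f j))
      c (((n : ℝ) * c) ^ t.card) hc (hf x) ih a b
    calc ‖(Polynomial.aeval M (f x) * Polynomial.aeval M (∏ j ∈ t, f j)) a b‖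
        ≤ n * (c * ((n : ℝ) * c) ^ t.card) := this
      _ = (n : ℝ) * c * ((n : ℝ) * c) ^ t.card := by ring

/-- If `M = U * diag(λ) * U⁻¹` with pairwise `ε`-separated eigenvalues bounded by `B`,
and `p` is a polynomial with `|p(λ i) - λ i ^ E| ≤ δ` for all `i`, then every entry of
`p(M) - M^E` is bounded by `δ * n² * (1+B)^(n-1) * ε⁻¹^(n-1) * (n * max 1 ‖M‖)^(n-1)`. -/
theorem stmt_7 (n : ℕ) (hn : 1 ≤ n) (ε B : ℝ) (hε : 0 < ε)
    (M U : Matrix (Fin n) (Fin n) ℂ) (hU : IsUnit U)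
    (lam : Fin n → ℂ)
    (hM : M = U * Matrix.diagonal lam * U⁻¹)
    (hsep : ∀ i j, i ≠ j → ε ≤ ‖lam i - lam j‖)
    (hlamB : ∀ i, ‖lam i‖ ≤ B)
    (E : ℕ) (δ : ℝ) (hδ : 0 < δ)
    (p : Polynomial ℂ)
    (hp : ∀ i, ‖p.eval (lam i) - lam i ^ E‖ ≤ δ) :
    ∀ i j, ‖(Polynomial.aeval M p - M ^ E) i j‖ ≤
      δ * (n : ℝ) ^ 2 * (1 + B) ^ (n - 1) * (ε⁻¹) ^ (n - 1) *
        ((n : ℝ) * max 1 (matMaxNorm M)) ^ (n - 1) := by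
  classical
  set u : (Matrix (Fin n) (Fin n) ℂ)ˣ := hU.unit with hu
  have huU : (↑u : Matrix (Fin n) (Fin n) ℂ) = U := hU.unit_spec
  have huinv : (↑u⁻¹ : Matrix (Fin n) (Fin n) ℂ) = U⁻¹ := by
    rw [Matrix.coe_units_inv, huU]
  -- aeval of any polynomial at M is conjugated diagonal
  have haM : ∀ r : Polynomial ℂ, Polynomial.aeval M r =
      U * Matrix.diagonal (fun k => r.eval (lam k)) * U⁻¹ := by
    intro r
    have h1 : M = conjAlgHom u (Matrix.diagonalAlgHom ℂ lam) := by
      rw [conjAlgHom_apply, Matrix.diagonalAlgHom_apply, huU, huinv, ← hM]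
    rw [h1, Polynomial.aeval_algHom_apply, Polynomial.aeval_algHom_apply]
    have h2 : (Polynomial.aeval lam r : Fin n → ℂ) = fun k => r.eval (lam k) := by
      funext k
      calc (Polynomial.aeval lam) r k
          = Polynomial.aeval (lam k) r :=
            (Polynomial.aeval_algHom_apply (Pi.evalAlgHom ℂ (fun _ => ℂ) k) lam r).symm
        _ = r.eval (lam k) := by
            rw [← Polynomial.coe_aeval_eq_eval]
    rw [conjAlgHom_apply, Matrix.diagonalAlgHom_apply, huU, huinv, h2]
  -- notation
  set q : Polynomial ℂ := p - Polynomial.X ^ E with hq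
  have hqM : Polynomial.aeval M p - M ^ E = Polynomial.aeval M q := by
    rw [hq, map_sub, map_pow, Polynomial.aeval_X]
  have hqev : ∀ k, ‖q.eval (lam k)‖ ≤ δ := by
    intro k; simpa [hq] using hp k
  have hne : ∀ i j : Fin n, i ≠ j → lam i - lam j ≠ 0 := by
    intro i j hij h
    have := hsep i j hij
    rw [h] at this
    simp at this
    linarith
  -- Lagrange basis polynomials
  set ell : Fin n → Polynomial ℂ := fun i =>
    ∏ j ∈ Finset.univ.erase i,
      (Polynomial.C ((lam i - lam j)⁻¹) * (Polynomial.X - Polynomial.C (lam j))) with hell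
  have hell_eval : ∀ i k, (ell i).eval (lam k) = if i = k then 1 else 0 := by
    intro i k
    rw [hell]
    simp only [Polynomial.eval_prod, Polynomial.eval_mul, Polynomial.eval_C,
      Polynomial.eval_sub, Polynomial.eval_X]
    rcases eq_or_ne i k with rfl | hik
    · rw [if_pos rfl]
      refine Finset.prod_eq_one fun j hj => ?_
      exact inv_mul_cancel₀ (hne i j (Finset.ne_of_mem_erase hj).symm)
    · rw [if_neg hik]
      refine Finset.prod_eq_zero (Finset.mem_erase.2 ⟨fun h => hik h.symm, Finset.mem_univ k⟩) ?_
      simp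
  -- key decomposition
  have hdecomp : Polynomial.aeval M q =
      ∑ i, q.eval (lam i) • Polynomial.aeval M (ell i) := by
    have hterm : ∀ i : Fin n, q.eval (lam i) • Polynomial.aeval M (ell i) =
        U * (q.eval (lam i) • Matrix.diagonal (fun k => (ell i).eval (lam k))) * U⁻¹ := by
      intro i
      rw [haM (ell i), Matrix.mul_smul, Matrix.smul_mul]
    rw [haM q]
    simp only [hterm]
    rw [← Finset.sum_mul, ← Finset.mul_sum]
    congr 2
    ext a b
    simp only [Matrix.sum_apply, Matrix.smul_apply, Matrix.diagonal_apply, hell_eval]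
    rcases eq_or_ne a b with rfl | hab
    · simp only [if_pos rfl]
      rw [Finset.sum_eq_single a]
      · simp
      · intro i _ hia; simp [hia]
      · simp
    · simp [hab]
  -- numeric setup
  have hB0 : 0 ≤ B := le_trans (norm_nonneg _) (hlamB ⟨0, hn⟩)
  set m1 : ℝ := max 1 (matMaxNorm M) with hm1
  have hm1one : (1 : ℝ) ≤ m1 := le_max_left _ _
  set c : ℝ := ε⁻¹ * ((1 + B) * m1) with hc
  have hc0 : 0 ≤ c := by positivity
  -- entrywise bound for each factor
  have hfac : ∀ i j a b,
      ‖(Polynomial.aeval M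
        (Polynomial.C ((lam i - lam j)⁻¹) * (Polynomial.X - Polynomial.C (lam j)))) a b‖ ≤
        c := by
    intro i j a b
    have hval : (Polynomial.aeval M
        (Polynomial.C ((lam i - lam j)⁻¹) * (Polynomial.X - Polynomial.C (lam j)))) a b =
        (lam i - lam j)⁻¹ * (M a b - lam j * (1 : Matrix (Fin n) (Fin n) ℂ) a b) := by
      rw [map_mul, map_sub, Polynomial.aeval_X, Polynomial.aeval_C, Polynomial.aeval_C,
        ← Algebra.smul_def, Algebra.algebraMap_eq_smul_one]
      simp [Matrix.smul_apply, Matrix.sub_apply, smul_eq_mul]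
    rw [hval, norm_mul]
    have h1 : ‖(lam i - lam j)⁻¹‖ ≤ ε⁻¹ := by
      rcases eq_or_ne i j with rfl | hij
      · simp [inv_nonneg.2 hε.le]
      · rw [norm_inv]
        exact inv_anti₀ hε (hsep i j hij)
    have h2 : ‖M a b - lam j * (1 : Matrix (Fin n) (Fin n) ℂ) a b‖ ≤
        (1 + B) * m1 := by
      calc ‖M a b - lam j * (1 : Matrix (Fin n) (Fin n) ℂ) a b‖ ≤
          ‖M a b‖ + ‖lam j * (1 : Matrix (Fin n) (Fin n) ℂ) a b‖ := by
            exact (norm_sub_le _ _)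
        _ ≤ m1 + B := by
            gcongr
            · exact (abs_le_matMaxNorm M a b).trans (le_max_right _ _)
            · rw [norm_mul]
              calc ‖lam j‖ * ‖(1 : Matrix (Fin n) (Fin n) ℂ) a b‖ ≤
                  B * 1 := by
                    apply mul_le_mul (hlamB j) _ (norm_nonneg _) hB0
                    rcases eq_or_ne a b with rfl | hab
                    · simp [Matrix.one_apply]
                    · simp [Matrix.one_apply, hab]
                _ = B := mul_one B
        _ ≤ (1 + B) * m1 := by nlinarith
    calc ‖(lam i - lam j)⁻¹‖ *
          ‖M a b - lam j * (1 : Matrix (Fin n) (Fin n) ℂ) a b‖ ≤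
        ε⁻¹ * ((1 + B) * m1) := by
          apply mul_le_mul h1 h2 (norm_nonneg _) (inv_nonneg.2 hε.le)
      _ = c := hc.symm
  -- bound on entries of aeval M (ell i)
  have hellbound : ∀ i a b, ‖(Polynomial.aeval M (ell i)) a b‖ ≤
      ((n : ℝ) * c) ^ (n - 1) := by
    intro i a b
    have hcard : (Finset.univ.erase i).card = n - 1 := by
      rw [Finset.card_erase_of_mem (Finset.mem_univ i), Finset.card_univ, Fintype.card_fin]
    have := aeval_prod_entry_bound M
      (fun j => Polynomial.C ((lam i - lam j)⁻¹) * (Polynomial.X - Polynomial.C (lam j)))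
      c hc0 (fun j a b => hfac i j a b) (Finset.univ.erase i) a b
    rw [hcard] at this
    exact this
  -- final estimate
  intro i j
  rw [hqM, hdecomp]
  have hsum : ‖(∑ s, q.eval (lam s) • Polynomial.aeval M (ell s)) i j‖ ≤
      ∑ s : Fin n, δ * ((n : ℝ) * c) ^ (n - 1) := by
    rw [Matrix.sum_apply]
    refine (norm_sum_le _ _).trans (Finset.sum_le_sum fun s _ => ?_)
    rw [Matrix.smul_apply, smul_eq_mul, norm_mul]
    exact mul_le_mul (hqev s) (hellbound s i j) (norm_nonneg _) hδ.le
  refine hsum.trans ?_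
  rw [Finset.sum_const, Finset.card_univ, Fintype.card_fin, nsmul_eq_mul]
  have hkey : ((n : ℝ) * c) ^ (n - 1) =
      (1 + B) ^ (n - 1) * (ε⁻¹) ^ (n - 1) * ((n : ℝ) * m1) ^ (n - 1) := by
    rw [← mul_pow, ← mul_pow]
    congr 1
    rw [hc]; ring
  rw [hkey]
  have hX : 0 ≤ (1 + B) ^ (n - 1) * (ε⁻¹) ^ (n - 1) * ((n : ℝ) * m1) ^ (n - 1) := by
    positivity
  have hn' : (1 : ℝ) ≤ (n : ℝ) := by exact_mod_cast hn
  nlinarith [mul_nonneg hδ.le hX, mul_nonneg (mul_nonneg hδ.le hX) (sub_nonneg.2 hn')]
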